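/- Let h ∈ F_2^n be a fixed word of Hamming weight w and let e be chosen uniformly at random among the words of F_2^n of Hamming weight t. Then P(⟨h,e⟩ = 1) = (1/2)·(1 - (-2)^w · P_w^n(t) / C(n,w)), where P_w^n is the binary Krawtchouk polynomial of degree w and order n. Equivalently, (-2)^w P_w^n(t)/C(n,w) = 1 - 2·P(⟨h,e⟩=1). -/

import Mathlib

open Finset

lemma zmod_cast_eq_one_iff_odd (k : ℕ) : (k : ZMod 2) = 1 ↔ Odd k := by
  rw [Nat.odd_iff, ← ZMod.natCast_mod k 2]
  rcases Nat.mod_two_eq_zero_or_one k with h | h <;> rw [h] <;> simp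

lemma choose_swap (m a b : ℕ) (ha : a ≤ m) (hb : b ≤ m) :
    m.choose a * (m - a).choose b = m.choose b * (m - b).choose a := by
  by_cases hab : a + b ≤ m
  · have h1 := Nat.choose_mul (n := m) (k := a + b) (s := a) (Nat.le_add_right a b)
    have h2 := Nat.choose_mul (n := m) (k := a + b) (s := b) (Nat.le_add_left b a)
    simp only [Nat.add_sub_cancel_left, Nat.add_sub_cancel] at h1 h2
    rw [← h1, ← h2, Nat.choose_symm_add]
  · rw [Nat.choose_eq_zero_of_lt (by omega : m - a < b),
      Nat.choose_eq_zero_of_lt (by omega : m - b < a), Nat.mul_zero, Nat.mul_zero]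

lemma count_fiber {n : ℕ} (H : Finset (Fin n)) (t j : ℕ) (hj : j ≤ t) :
    (univ.filter fun S : Finset (Fin n) => S.card = t ∧ (S ∩ H).card = j).card
      = H.card.choose j * Hᶜ.card.choose (t - j) := by
  rw [← Finset.card_powersetCard j H, ← Finset.card_powersetCard (t - j) Hᶜ,
    ← Finset.card_product]
  apply Finset.card_nbij' (fun S => (S ∩ H, S \ H)) (fun p => p.1 ∪ p.2)
  · intro S hS
    simp only [mem_coe, mem_filter, mem_univ, true_and] at hS
    obtain ⟨hc, hi⟩ := hS
    simp only [mem_coe, mem_product, mem_powersetCard]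
    refine ⟨⟨inter_subset_right, hi⟩, ?_, ?_⟩
    · intro x hx
      simp only [mem_sdiff] at hx
      simp [hx.2]
    · have := Finset.card_inter_add_card_sdiff S H
      omega
  · intro p hp
    simp only [mem_coe, mem_product, mem_powersetCard] at hp
    obtain ⟨⟨hA, hAc⟩, hB, hBc⟩ := hp
    have hdisj : Disjoint p.1 p.2 := by
      rw [Finset.disjoint_left]
      intro x hx1 hx2
      have := hB hx2
      simp only [mem_compl] at this
      exact this (hA hx1)
    have hinter : (p.1 ∪ p.2) ∩ H = p.1 := by
      ext x
      simp only [mem_inter, mem_union]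
      constructor
      · rintro ⟨hx1 | hx2, hxH⟩
        · exact hx1
        · exact absurd hxH (by simpa using hB hx2)
      · intro hx; exact ⟨Or.inl hx, hA hx⟩
    simp only [mem_coe, mem_filter, mem_univ, true_and]
    rw [Finset.card_union_of_disjoint hdisj, hinter]
    exact ⟨by omega, hAc⟩
  · intro S hS
    dsimp only
    rw [union_comm, Finset.sdiff_union_inter]
  · intro p hp
    simp only [mem_coe, mem_product, mem_powersetCard] at hp
    obtain ⟨⟨hA, hAc⟩, hB, hBc⟩ := hp
    have hinter : (p.1 ∪ p.2) ∩ H = p.1 := by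
      ext x
      simp only [mem_inter, mem_union]
      constructor
      · rintro ⟨hx1 | hx2, hxH⟩
        · exact hx1
        · exact absurd hxH (by simpa using hB hx2)
      · intro hx; exact ⟨Or.inl hx, hA hx⟩
    have hsdiff : (p.1 ∪ p.2) \ H = p.2 := by
      ext x
      simp only [mem_sdiff, mem_union]
      constructor
      · rintro ⟨hx1 | hx2, hxH⟩
        · exact absurd (hA hx1) hxH
        · exact hx2
      · intro hx; exact ⟨Or.inr hx, by simpa using hB hx⟩
    dsimp only
    rw [hinter, hsdiff]

lemma count_odd {n : ℕ} (H : Finset (Fin n)) (t : ℕ) :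
    (univ.filter fun S : Finset (Fin n) => S.card = t ∧ Odd ((S ∩ H).card)).card
      = ∑ j ∈ (Finset.range (t + 1)).filter (fun j => Odd j),
          H.card.choose j * Hᶜ.card.choose (t - j) := by
  rw [Finset.card_eq_sum_card_fiberwise
    (f := fun S : Finset (Fin n) => (S ∩ H).card)
    (t := (Finset.range (t + 1)).filter (fun j => Odd j))]
  · apply Finset.sum_congr rfl
    intro j hj
    simp only [mem_filter, mem_range] at hj
    rw [Finset.filter_filter]
    have heq : Finset.filter
        (fun S : Finset (Fin n) => (S.card = t ∧ Odd ((S ∩ H).card)) ∧ (S ∩ H).card = j) univ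
        = Finset.filter (fun S : Finset (Fin n) => S.card = t ∧ (S ∩ H).card = j) univ := by
      apply Finset.filter_congr
      intro S _
      constructor
      · rintro ⟨⟨h1, _⟩, h3⟩; exact ⟨h1, h3⟩
      · rintro ⟨h1, h2⟩; exact ⟨⟨h1, h2 ▸ hj.2⟩, h2⟩
    rw [heq]
    exact count_fiber H t j (by omega)
  · intro S hS
    simp only [mem_coe, mem_filter, mem_univ, true_and] at hS
    have h1 : (S ∩ H).card ≤ S.card := Finset.card_le_card inter_subset_left
    simp only [mem_coe, mem_filter, mem_range]
    exact ⟨by omega, hS.2⟩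

lemma count_all {n : ℕ} (H : Finset (Fin n)) (t : ℕ) (ht : t ≤ n) :
    ∑ j ∈ Finset.range (t + 1), H.card.choose j * Hᶜ.card.choose (t - j)
      = n.choose t := by
  have key : (univ.filter fun S : Finset (Fin n) => S.card = t).card = n.choose t := by
    have : (univ.filter fun S : Finset (Fin n) => S.card = t)
        = Finset.powersetCard t (univ : Finset (Fin n)) := by
      ext S
      simp [Finset.mem_powersetCard_univ]
    rw [this, Finset.card_powersetCard, card_univ, Fintype.card_fin]
  rw [← key]
  rw [Finset.card_eq_sum_card_fiberwise
    (f := fun S : Finset (Fin n) => (S ∩ H).card) (t := Finset.range (t + 1))]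
  · apply Finset.sum_congr rfl
    intro j hj
    simp only [mem_range] at hj
    rw [Finset.filter_filter]
    exact (count_fiber H t j (by omega)).symm
  · intro S hS
    simp only [mem_coe, mem_filter, mem_univ, true_and] at hS
    have h1 : (S ∩ H).card ≤ S.card := Finset.card_le_card inter_subset_left
    simp only [mem_coe, mem_range]
    omega

lemma cross_identity (n w t : ℕ) (ht : t ≤ n) (hw : w ≤ n) :
    (n.choose w : ℝ) * ∑ j ∈ Finset.range (t + 1),
        (-1 : ℝ) ^ j * (w.choose j : ℝ) * ((n - w).choose (t - j) : ℝ)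
    = (n.choose t : ℝ) * ∑ j ∈ Finset.range (w + 1),
        (-1 : ℝ) ^ j * (t.choose j : ℝ) * ((n - t).choose (w - j) : ℝ) := by
  rw [Finset.mul_sum, Finset.mul_sum]
  have hsub1 : Finset.range (min t w + 1) ⊆ Finset.range (t + 1) := by
    apply Finset.range_subset_range.2; omega
  have hsub2 : Finset.range (min t w + 1) ⊆ Finset.range (w + 1) := by
    apply Finset.range_subset_range.2; omega
  rw [← Finset.sum_subset hsub1 ?_, ← Finset.sum_subset hsub2 ?_]
  · apply Finset.sum_congr rfl
    intro j hj
    simp only [Finset.mem_range] at hj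
    have hjt : j ≤ t := by omega
    have hjw : j ≤ w := by omega
    have e1 : n.choose w * w.choose j = n.choose j * (n - j).choose (w - j) :=
      Nat.choose_mul hjw
    have e2 : n.choose t * t.choose j = n.choose j * (n - j).choose (t - j) :=
      Nat.choose_mul hjt
    have e3 : (n - j).choose (w - j) * (n - w).choose (t - j)
        = (n - j).choose (t - j) * (n - t).choose (w - j) := by
      have h := choose_swap (n - j) (w - j) (t - j) (by omega) (by omega)
      rwa [show n - j - (w - j) = n - w by omega, show n - j - (t - j) = n - t by omega] at h
    have key : n.choose w * (w.choose j * (n - w).choose (t - j))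
        = n.choose t * (t.choose j * (n - t).choose (w - j)) := by
      calc n.choose w * (w.choose j * (n - w).choose (t - j))
          = (n.choose w * w.choose j) * (n - w).choose (t - j) := by ring
        _ = (n.choose j * (n - j).choose (w - j)) * (n - w).choose (t - j) := by rw [e1]
        _ = n.choose j * ((n - j).choose (w - j) * (n - w).choose (t - j)) := by ring
        _ = n.choose j * ((n - j).choose (t - j) * (n - t).choose (w - j)) := by rw [e3]
        _ = (n.choose j * (n - j).choose (t - j)) * (n - t).choose (w - j) := by ring
        _ = (n.choose t * t.choose j) * (n - t).choose (w - j) := by rw [e2]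
        _ = n.choose t * (t.choose j * (n - t).choose (w - j)) := by ring
    have keyR := congrArg (fun x : ℕ => (x : ℝ)) key
    push_cast at keyR
    linear_combination (-1 : ℝ) ^ j * keyR
  · intro j hjm hjn
    simp only [Finset.mem_range] at hjm hjn
    have : t < j := by omega
    rw [Nat.choose_eq_zero_of_lt this]
    push_cast
    ring
  · intro j hjm hjn
    simp only [Finset.mem_range] at hjm hjn
    have : w < j := by omega
    rw [Nat.choose_eq_zero_of_lt this]
    push_cast
    ring

lemma parity_sum {n : ℕ} (h e : Fin n → ZMod 2) :
    (∑ i : Fin n, h i * e i)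
      = ((((univ.filter fun i : Fin n => e i = 1) ∩
          (univ.filter fun i : Fin n => h i = 1)).card : ℕ) : ZMod 2) := by
  have h2 : ∀ x : ZMod 2, x = 0 ∨ x = 1 := by decide
  have hterm : ∀ i : Fin n, h i * e i = if (e i = 1 ∧ h i = 1) then 1 else 0 := by
    intro i
    rcases h2 (h i) with hx | hx <;> rcases h2 (e i) with hy | hy <;> simp [hx, hy]
  rw [Finset.sum_congr rfl (fun i _ => hterm i), Finset.sum_boole, ← Finset.filter_and]

lemma step1 {n t : ℕ} (h : Fin n → ZMod 2) :
    (univ.filter (fun e : Fin n → ZMod 2 =>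
        (univ.filter (fun i : Fin n => e i = 1)).card = t ∧
          (∑ i : Fin n, h i * e i) = 1)).card
    = (univ.filter (fun S : Finset (Fin n) =>
        S.card = t ∧ Odd ((S ∩ (univ.filter fun i : Fin n => h i = 1)).card))).card := by
  have h2 : ∀ x : ZMod 2, x = 0 ∨ x = 1 := by decide
  apply Finset.card_nbij' (fun e => univ.filter (fun i => e i = 1))
    (fun S => fun i => if i ∈ S then 1 else 0)
  · intro e he
    simp only [mem_coe, mem_filter, mem_univ, true_and] at he ⊢
    refine ⟨he.1, ?_⟩
    rw [← zmod_cast_eq_one_iff_odd, ← parity_sum h e]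
    exact he.2
  · intro S hS
    simp only [mem_coe, mem_filter, mem_univ, true_and] at hS ⊢
    have hfS : (univ.filter fun i : Fin n => (if i ∈ S then (1 : ZMod 2) else 0) = 1) = S := by
      ext i
      by_cases hi : i ∈ S <;> simp [hi]
    constructor
    · rw [hfS]; exact hS.1
    · rw [parity_sum h, hfS, zmod_cast_eq_one_iff_odd]
      exact hS.2
  · intro e _
    funext i
    rcases h2 (e i) with hx | hx <;> simp [hx]
  · intro S _
    ext i
    by_cases hi : i ∈ S <;> simp [hi]

/-- For a fixed `h ∈ F_2^n` of Hamming weight `w` and a uniformly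
random error `e` of Hamming weight `t`, the probability that `⟨h,e⟩ = 1` equals
`(1/2)·(1 - (-2)^w · P_w^n(t) / C(n,w))`, where `P_w^n` is the binary Krawtchouk
polynomial `P_w^n(X) = ((-1)^w/2^w) ∑_j (-1)^j C(X,j) C(n-X, w-j)` evaluated at the
integer `t`. -/
theorem prob_parity_check_krawtchouk
    (n w t : ℕ) (ht : t ≤ n) (h : Fin n → ZMod 2)
    (hw : (Finset.univ.filter (fun i : Fin n => h i = 1)).card = w) :
    ((Finset.univ.filter (fun e : Fin n → ZMod 2 =>
        (Finset.univ.filter (fun i : Fin n => e i = 1)).card = t ∧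
          (∑ i : Fin n, h i * e i) = 1)).card : ℝ) / (n.choose t : ℝ)
    = (1/2) * (1 - (-2 : ℝ) ^ w *
        (((-1 : ℝ) ^ w / 2 ^ w) * ∑ j ∈ Finset.range (w + 1),
          (-1 : ℝ) ^ j * (t.choose j : ℝ) * ((n - t).choose (w - j) : ℝ))
        / (n.choose w : ℝ)) := by
  have hwn : w ≤ n := by
    have := Finset.card_filter_le (univ : Finset (Fin n)) (fun i => h i = 1)
    simp only [card_univ, Fintype.card_fin] at this
    omega
  set H : Finset (Fin n) := univ.filter (fun i : Fin n => h i = 1) with hH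
  have hHc : Hᶜ.card = n - w := by rw [Finset.card_compl, hw, Fintype.card_fin]
  have s1 := step1 (t := t) h
  have s2 := count_odd H t
  have s3 := count_all H t ht
  rw [hw, hHc] at s2 s3
  -- real versions
  set T : ℝ := ∑ j ∈ Finset.range (w + 1),
      (-1 : ℝ) ^ j * (t.choose j : ℝ) * ((n - t).choose (w - j) : ℝ) with hT
  set K : ℝ := ∑ j ∈ Finset.range (t + 1),
      (-1 : ℝ) ^ j * (w.choose j : ℝ) * ((n - w).choose (t - j) : ℝ) with hK
  have hcntR : ((Finset.univ.filter (fun e : Fin n → ZMod 2 =>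
        (Finset.univ.filter (fun i : Fin n => e i = 1)).card = t ∧
          (∑ i : Fin n, h i * e i) = 1)).card : ℝ)
      = ∑ j ∈ (Finset.range (t + 1)).filter (fun j => Odd j),
          (w.choose j : ℝ) * ((n - w).choose (t - j) : ℝ) := by
    rw [s1, s2]
    push_cast
    rfl
  have htot : (n.choose t : ℝ)
      = ∑ j ∈ Finset.range (t + 1), (w.choose j : ℝ) * ((n - w).choose (t - j) : ℝ) := by
    rw [← s3]
    push_cast
    rfl
  have h2cnt : 2 * (∑ j ∈ (Finset.range (t + 1)).filter (fun j => Odd j),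
        (w.choose j : ℝ) * ((n - w).choose (t - j) : ℝ))
      = (n.choose t : ℝ) - K := by
    rw [htot, hK]
    rw [← Finset.sum_filter_add_sum_filter_not (Finset.range (t + 1)) (fun j => Odd j)
        (fun j => (w.choose j : ℝ) * ((n - w).choose (t - j) : ℝ)),
      ← Finset.sum_filter_add_sum_filter_not (Finset.range (t + 1)) (fun j => Odd j)
        (fun j => (-1 : ℝ) ^ j * (w.choose j : ℝ) * ((n - w).choose (t - j) : ℝ))]
    have hA : ∑ j ∈ (Finset.range (t + 1)).filter (fun j => ¬ Odd j),
        (-1 : ℝ) ^ j * (w.choose j : ℝ) * ((n - w).choose (t - j) : ℝ)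
        = ∑ j ∈ (Finset.range (t + 1)).filter (fun j => ¬ Odd j),
          (w.choose j : ℝ) * ((n - w).choose (t - j) : ℝ) := by
      apply Finset.sum_congr rfl
      intro j hj
      simp only [Finset.mem_filter, Nat.not_odd_iff_even] at hj
      rw [hj.2.neg_one_pow]
      ring
    have hB : ∑ j ∈ (Finset.range (t + 1)).filter (fun j => Odd j),
        (-1 : ℝ) ^ j * (w.choose j : ℝ) * ((n - w).choose (t - j) : ℝ)
        = - ∑ j ∈ (Finset.range (t + 1)).filter (fun j => Odd j),
          (w.choose j : ℝ) * ((n - w).choose (t - j) : ℝ) := by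
      rw [← Finset.sum_neg_distrib]
      apply Finset.sum_congr rfl
      intro j hj
      simp only [Finset.mem_filter] at hj
      rw [hj.2.neg_one_pow]
      ring
    rw [hA, hB]
    ring
  have cross := cross_identity n w t ht hwn
  rw [← hK, ← hT] at cross
  have hct : (0 : ℝ) < (n.choose t : ℝ) := by exact_mod_cast Nat.choose_pos ht
  have hcw : (0 : ℝ) < (n.choose w : ℝ) := by exact_mod_cast Nat.choose_pos hwn
  have hpow : (-2 : ℝ) ^ w * ((-1 : ℝ) ^ w / 2 ^ w) = 1 := by
    have h1 : ((-1 : ℝ)) ^ w * (-1 : ℝ) ^ w = 1 := by rw [← mul_pow]; norm_num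
    have h2 : (2 : ℝ) ^ w ≠ 0 := by positivity
    rw [show (-2 : ℝ) = -1 * 2 by norm_num, mul_pow]
    field_simp
    linear_combination h1
  have hT2 : T / (n.choose w : ℝ) = K / (n.choose t : ℝ) := by
    rw [div_eq_div_iff (ne_of_gt hcw) (ne_of_gt hct)]
    linear_combination -cross
  rw [hcntR, show (-2 : ℝ) ^ w * ((-1 : ℝ) ^ w / 2 ^ w * T) = T by
    rw [← mul_assoc, hpow, one_mul]]
  rw [hT2]
  field_simp
  linear_combination h2cnt
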